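/- arXiv:2507.12385 — 2 statements merged into one kernel-verified Lean document; each statement's English description precedes it below -/
import Mathlib

section
/- Let γ₁ = N(0, σ₁²I) and γ₂ = N(0, σ₂²I) be two centered isotropic Gaussian measures on ℝ^d with σ₁, σ₂ > 0, and let f : ℝ^d → ℝ be measurable with f ∈ L^{2p}(γ₁). Let p > 1 and set α = σ₁²/σ₂², and assume α > 1/p. Let m₁ = ∫ f dγ₁. Then Var_{γ₂}(f) ≤ C·‖f − m₁‖²_{L^{2p}(γ₁)}, where C = α^{d/2}·((p−1)/(pα−1))^{d(p−1)/(2p)} and Var_{γ₂}(f) = ∫ (f − ∫f dγ₂)² dγ₂. -/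
open MeasureTheory Real
open scoped NNReal ENNReal

noncomputable section

abbrev Ed (d : ℕ) := EuclideanSpace ℝ (Fin d)

/-- The Lebesgue density of the centered isotropic Gaussian measure `N(0, σ²I)` on `ℝ^d`. -/
def gaussDen (d : ℕ) (σ : ℝ) (x : Ed d) : ℝ :=
  (2 * π * σ ^ 2) ^ (-(d : ℝ) / 2) * Real.exp (-‖x‖ ^ 2 / (2 * σ ^ 2))

/-- The centered isotropic Gaussian measure `N(0, σ²I)` on `ℝ^d`. -/
def gaussMeasure (d : ℕ) (σ : ℝ) : Measure (Ed d) :=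
  volume.withDensity fun x => ENNReal.ofReal (gaussDen d σ x)

lemma integrable_rexp_neg_mul_sq_norm (d : ℕ) {b : ℝ} (hb : 0 < b) :
    Integrable (fun x : Ed d => rexp (-b * ‖x‖ ^ 2)) := by
  have h := (GaussianFourier.integrable_cexp_neg_mul_sq_norm_add (V := Ed d)
    (show (0:ℝ) < ((b:ℂ)).re from hb) 0 0).norm
  refine h.congr (Filter.Eventually.of_forall fun x => ?_)
  simp [Complex.norm_exp]
  norm_cast
  exact Or.inl rfl

lemma integral_rexp_neg_mul_sq_norm' (d : ℕ) {b : ℝ} (hb : 0 < b) :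
    ∫ x : Ed d, rexp (-b * ‖x‖ ^ 2) = (π / b) ^ ((d:ℝ) / 2) := by
  rw [GaussianFourier.integral_rexp_neg_mul_sq_norm hb]
  simp

lemma gaussDen_pos {d : ℕ} {σ : ℝ} (hσ : 0 < σ) (x : Ed d) : 0 < gaussDen d σ x := by
  have : (0:ℝ) < 2 * π * σ ^ 2 := by positivity
  unfold gaussDen; positivity

lemma continuous_gaussDen (d : ℕ) (σ : ℝ) : Continuous (gaussDen d σ) := by
  unfold gaussDen
  fun_prop

-- key: ∫ exp(-b‖x‖²) * gaussDen σ = (2σ²b+1)^{-d/2}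
lemma gauss_exp_int (d : ℕ) {σ b : ℝ} (hσ : 0 < σ) (hb : 0 < b * (2 * σ ^ 2) + 1) :
    ∫ x : Ed d, rexp (-b * ‖x‖ ^ 2) * gaussDen d σ x
      = (b * (2 * σ ^ 2) + 1) ^ (-(d : ℝ) / 2) := by
  have h2σ : (0:ℝ) < 2 * σ ^ 2 := by positivity
  have hb' : 0 < b + 1 / (2 * σ ^ 2) := by
    rw [← mul_pos_iff_of_pos_right h2σ]
    rw [add_mul, one_div, inv_mul_cancel₀ (ne_of_gt h2σ)]
    exact hb
  have key : ∀ x : Ed d, rexp (-b * ‖x‖ ^ 2) * gaussDen d σ x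
      = (2 * π * σ ^ 2) ^ (-(d : ℝ) / 2) * rexp (-(b + 1 / (2 * σ ^ 2)) * ‖x‖ ^ 2) := by
    intro x
    unfold gaussDen
    rw [mul_comm, mul_assoc, ← Real.exp_add]
    ring_nf
  simp_rw [key]
  rw [integral_const_mul, integral_rexp_neg_mul_sq_norm' d hb']
  have hπ : (0:ℝ) < 2 * π * σ ^ 2 := by positivity
  have e1 : π / (b + 1 / (2 * σ ^ 2)) = (2 * π * σ ^ 2) / (b * (2 * σ ^ 2) + 1) := by
    field_simp
  rw [e1, Real.div_rpow hπ.le hb.le, neg_div, Real.rpow_neg hπ.le, Real.rpow_neg hb.le]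
  have h1 : (2 * π * σ ^ 2) ^ ((d:ℝ) / 2) ≠ 0 := by positivity
  field_simp
lemma gauss_exp_integrable (d : ℕ) {σ b : ℝ} (hσ : 0 < σ) (hb : 0 < b * (2 * σ ^ 2) + 1) :
    Integrable (fun x : Ed d => rexp (-b * ‖x‖ ^ 2) * gaussDen d σ x) := by
  have h2σ : (0:ℝ) < 2 * σ ^ 2 := by positivity
  have hb' : 0 < b + 1 / (2 * σ ^ 2) := by
    rw [← mul_pos_iff_of_pos_right h2σ, add_mul, one_div, inv_mul_cancel₀ (ne_of_gt h2σ)]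
    exact hb
  have key : ∀ x : Ed d, rexp (-b * ‖x‖ ^ 2) * gaussDen d σ x
      = (2 * π * σ ^ 2) ^ (-(d : ℝ) / 2) * rexp (-(b + 1 / (2 * σ ^ 2)) * ‖x‖ ^ 2) := by
    intro x
    unfold gaussDen
    rw [mul_comm, mul_assoc, ← Real.exp_add]
    ring_nf
  simp_rw [key]
  exact (integrable_rexp_neg_mul_sq_norm d hb').const_mul _


lemma gaussMeasure_prob (d : ℕ) {σ : ℝ} (hσ : 0 < σ) :
    IsProbabilityMeasure (gaussMeasure d σ) := by
  constructor
  rw [gaussMeasure, withDensity_apply _ MeasurableSet.univ, setLIntegral_univ]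
  have hint : Integrable (gaussDen d σ) := by
    have := gauss_exp_integrable d hσ (b := 0) (by norm_num)
    simpa using this
  rw [← ofReal_integral_eq_lintegral_ofReal hint
    (Filter.Eventually.of_forall fun x => (gaussDen_pos hσ x).le)]
  have := gauss_exp_int d hσ (b := 0) (by norm_num)
  simp only [zero_mul, neg_zero, zero_add, Real.one_rpow] at this
  simp only [neg_mul, zero_mul, neg_zero, Real.exp_zero, one_mul] at this
  rw [this]
  norm_num
lemma gaussDen_mul (d : ℕ) {σ₁ σ₂ : ℝ} (h₁ : 0 < σ₁) (h₂ : 0 < σ₂) (x : Ed d) :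
    gaussDen d σ₁ x *
      ((σ₁ ^ 2 / σ₂ ^ 2) ^ ((d:ℝ) / 2) *
        rexp (-((σ₁ ^ 2 / σ₂ ^ 2 - 1) / (2 * σ₁ ^ 2)) * ‖x‖ ^ 2))
      = gaussDen d σ₂ x := by
  have hA : (0:ℝ) < 2 * π * σ₁ ^ 2 := by positivity
  have hB : (0:ℝ) < 2 * π * σ₂ ^ 2 := by positivity
  unfold gaussDen
  have hc : σ₁ ^ 2 / σ₂ ^ 2 = (2 * π * σ₁ ^ 2) / (2 * π * σ₂ ^ 2) := by
    rw [mul_div_mul_left]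
    positivity
  have hexp : rexp (-‖x‖ ^ 2 / (2 * σ₁ ^ 2)) *
      rexp (-((σ₁ ^ 2 / σ₂ ^ 2 - 1) / (2 * σ₁ ^ 2)) * ‖x‖ ^ 2)
      = rexp (-‖x‖ ^ 2 / (2 * σ₂ ^ 2)) := by
    rw [← Real.exp_add]
    congr 1
    field_simp
    ring
  have hconst : (2 * π * σ₁ ^ 2) ^ (-(d:ℝ) / 2) * (σ₁ ^ 2 / σ₂ ^ 2) ^ ((d:ℝ) / 2)
      = (2 * π * σ₂ ^ 2) ^ (-(d:ℝ) / 2) := by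
    rw [hc, Real.div_rpow hA.le hB.le, neg_div, Real.rpow_neg hA.le, Real.rpow_neg hB.le]
    have h1 : (2 * π * σ₁ ^ 2) ^ ((d:ℝ) / 2) ≠ 0 := by positivity
    field_simp
  calc (2 * π * σ₁ ^ 2) ^ (-(d:ℝ) / 2) * rexp (-‖x‖ ^ 2 / (2 * σ₁ ^ 2)) *
        ((σ₁ ^ 2 / σ₂ ^ 2) ^ ((d:ℝ) / 2) *
          rexp (-((σ₁ ^ 2 / σ₂ ^ 2 - 1) / (2 * σ₁ ^ 2)) * ‖x‖ ^ 2))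
      = ((2 * π * σ₁ ^ 2) ^ (-(d:ℝ) / 2) * (σ₁ ^ 2 / σ₂ ^ 2) ^ ((d:ℝ) / 2)) *
        (rexp (-‖x‖ ^ 2 / (2 * σ₁ ^ 2)) *
          rexp (-((σ₁ ^ 2 / σ₂ ^ 2 - 1) / (2 * σ₁ ^ 2)) * ‖x‖ ^ 2)) := by ring
    _ = _ := by rw [hconst, hexp]

lemma gaussMeasure_eq (d : ℕ) {σ₁ σ₂ : ℝ} (h₁ : 0 < σ₁) (h₂ : 0 < σ₂) :
    gaussMeasure d σ₂ = (gaussMeasure d σ₁).withDensity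
      (fun x => ENNReal.ofReal ((σ₁ ^ 2 / σ₂ ^ 2) ^ ((d:ℝ) / 2) *
        rexp (-((σ₁ ^ 2 / σ₂ ^ 2 - 1) / (2 * σ₁ ^ 2)) * ‖x‖ ^ 2))) := by
  unfold gaussMeasure
  rw [← withDensity_mul]
  · congr 1
    funext x
    rw [Pi.mul_apply, ← ENNReal.ofReal_mul (gaussDen_pos h₁ x).le, gaussDen_mul d h₁ h₂ x]
  · exact ((continuous_gaussDen d σ₁).measurable).ennreal_ofReal
  · fun_prop
lemma integral_gaussMeasure {d : ℕ} {σ : ℝ} (hσ : 0 < σ) (g : Ed d → ℝ) :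
    ∫ x, g x ∂(gaussMeasure d σ) = ∫ x, g x * gaussDen d σ x := by
  rw [gaussMeasure]
  have : (fun x : Ed d => ENNReal.ofReal (gaussDen d σ x))
      = fun x => ((gaussDen d σ x).toNNReal : ℝ≥0∞) := rfl
  rw [this, integral_withDensity_eq_integral_smul
    ((continuous_gaussDen d σ).measurable.real_toNNReal)]
  congr 1
  funext x
  rw [NNReal.smul_def, smul_eq_mul, Real.coe_toNNReal _ (gaussDen_pos hσ x).le, mul_comm]

lemma integrable_gaussMeasure_iff {d : ℕ} {σ : ℝ} (hσ : 0 < σ) {g : Ed d → ℝ} :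
    Integrable g (gaussMeasure d σ) ↔ Integrable (fun x => g x * gaussDen d σ x) := by
  rw [gaussMeasure, integrable_withDensity_iff
    ((continuous_gaussDen d σ).measurable.ennreal_ofReal)
    (Filter.Eventually.of_forall fun x => ENNReal.ofReal_lt_top)]
  constructor <;> intro h <;> refine h.congr (Filter.Eventually.of_forall fun x => ?_) <;>
    simp [ENNReal.toReal_ofReal (gaussDen_pos hσ x).le]

set_option maxHeartbeats 2000000 in
/-- **Lemma 3.2 (variance change between Gaussians)**: for `γᵢ = N(0, σᵢ² I)`, `p > 1` and
`α = σ₁²/σ₂² > 1/p`, one has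
`Var_{γ₂}(f) ≤ α^{d/2} ((p-1)/(pα-1))^{d(p-1)/(2p)} ‖f - m₁‖²_{L^{2p}(γ₁)}`,
where `m₁ = ∫ f dγ₁` and `‖f - m₁‖²_{L^{2p}(γ₁)} = (∫ |f - m₁|^{2p} dγ₁)^{1/p}`. -/
theorem variance_change_gaussian (d : ℕ) (σ₁ σ₂ : ℝ) (h₁ : 0 < σ₁) (h₂ : 0 < σ₂)
    (f : Ed d → ℝ) (hf : Measurable f)
    (p : ℝ) (hp : 1 < p) (hα : 1 / p < σ₁ ^ 2 / σ₂ ^ 2)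
    (hfLp : MemLp f (ENNReal.ofReal (2 * p)) (gaussMeasure d σ₁)) :
    ∫ x, (f x - ∫ y, f y ∂(gaussMeasure d σ₂)) ^ 2 ∂(gaussMeasure d σ₂)
      ≤ (σ₁ ^ 2 / σ₂ ^ 2) ^ ((d : ℝ) / 2) *
          ((p - 1) / (p * (σ₁ ^ 2 / σ₂ ^ 2) - 1)) ^ ((d : ℝ) * (p - 1) / (2 * p)) *
        (∫ x, |f x - ∫ y, f y ∂(gaussMeasure d σ₁)| ^ (2 * p)
            ∂(gaussMeasure d σ₁)) ^ (1 / p) := by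
  haveI := gaussMeasure_prob d h₁
  haveI := gaussMeasure_prob d h₂
  set γ₁ := gaussMeasure d σ₁ with hγ₁
  set γ₂ := gaussMeasure d σ₂ with hγ₂
  set α : ℝ := σ₁ ^ 2 / σ₂ ^ 2 with hαdef
  have hαpos : 0 < α := by positivity
  have hppos : 0 < p := lt_trans one_pos hp
  have hpα : 1 < p * α := by
    rw [div_lt_iff₀ hppos] at hα
    linarith [hα]
  set q : ℝ := p / (p - 1) with hqdef
  have hpq : p.HolderConjugate q := Real.HolderConjugate.conjExponent hp
  set c : ℝ := (α - 1) / (2 * σ₁ ^ 2) with hcdef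
  set r : Ed d → ℝ := fun x => α ^ ((d:ℝ) / 2) * rexp (-c * ‖x‖ ^ 2) with hrdef
  have hrpos : ∀ x, 0 < r x := fun x => by positivity
  have hrmeas : Measurable r := by fun_prop
  set m₁ : ℝ := ∫ y, f y ∂γ₁ with hm₁
  set m₂ : ℝ := ∫ y, f y ∂γ₂ with hm₂
  set g : Ed d → ℝ := fun x => f x - m₁ with hgdef
  have hgmeas : Measurable g := by fun_prop
  have h2p : (0:ℝ) < 2 * p := by positivity
  -- MemLp of g
  have hγ₂eq : γ₂ = γ₁.withDensity (fun x => ENNReal.ofReal (r x)) := by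
    rw [hγ₂, hγ₁]
    exact gaussMeasure_eq d h₁ h₂
  have hrq : ∀ x, r x ^ q = α ^ ((d:ℝ) / 2 * q) * rexp (-(q * c) * ‖x‖ ^ 2) := by
    intro x
    rw [hrdef]
    rw [Real.mul_rpow (by positivity) (Real.exp_pos _).le, ← Real.rpow_mul hαpos.le,
      ← Real.exp_mul]
    ring_nf
  clear_value α q c r m₁ m₂ g
  have hg2p : MemLp g (ENNReal.ofReal (2 * p)) γ₁ := by
    rw [hgdef]
    exact hfLp.sub (memLp_const m₁)
  have hA_int : Integrable (fun x => |g x| ^ (2 * p)) γ₁ := by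
    have := hg2p.integrable_norm_rpow (by simp [hppos]) ENNReal.ofReal_ne_top
    simpa [ENNReal.toReal_ofReal h2p.le, ENNReal.toReal_ofReal hppos.le] using this
  set A : ℝ := ∫ x, |g x| ^ (2 * p) ∂γ₁ with hAdef
  have hA_nonneg : 0 ≤ A := integral_nonneg fun x => by positivity
  -- lintegral notation
  set G : Ed d → ℝ≥0∞ := fun x => ENNReal.ofReal ((g x) ^ 2) with hGdef
  set R : Ed d → ℝ≥0∞ := fun x => ENNReal.ofReal (r x) with hRdef
  have hGmeas : Measurable G := by fun_prop
  have hRmeas : Measurable R := by fun_prop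
  have hGR : ∫⁻ x, G x ∂γ₂ = ∫⁻ x, (G * R) x ∂γ₁ := by
    rw [hγ₂eq, lintegral_withDensity_eq_lintegral_mul _ hRmeas hGmeas]
    exact lintegral_congr fun x => by simp [mul_comm]
  -- value of ∫⁻ G^p
  have hGp : ∫⁻ x, G x ^ p ∂γ₁ = ENNReal.ofReal A := by
    have hpt : ∀ x, G x ^ p = ENNReal.ofReal (|g x| ^ (2 * p)) := by
      intro x
      rw [hGdef]
      rw [ENNReal.ofReal_rpow_of_nonneg (sq_nonneg _) hppos.le]
      congr 1
      rw [← sq_abs, ← Real.rpow_natCast |g x| 2, ← Real.rpow_mul (abs_nonneg _)]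
      norm_num
    simp_rw [hpt]
    rw [← ofReal_integral_eq_lintegral_ofReal hA_int
      (Filter.Eventually.of_forall fun x => by positivity)]
  -- the exponential-moment computation
  set B : ℝ := (q * c) * (2 * σ₁ ^ 2) + 1 with hBdef
  have hBeq : B = (p * α - 1) / (p - 1) := by
    have hp1 : p - 1 ≠ 0 := by linarith
    have hs : (2 * σ₁ ^ 2) ≠ 0 := by positivity
    rw [hBdef, hqdef, hcdef]
    field_simp
    ring
  have hBpos : 0 < B := by
    rw [hBeq]
    apply div_pos (by linarith) (by linarith)
  have hIq_int : Integrable (fun x => r x ^ q) γ₁ := by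
    rw [hγ₁, integrable_gaussMeasure_iff h₁]
    have := (gauss_exp_integrable d h₁ hBpos).const_mul (α ^ ((d:ℝ) / 2 * q))
    refine this.congr (Filter.Eventually.of_forall fun x => ?_)
    simp only [hrq]
    ring
  have hIq_val : ∫ x, r x ^ q ∂γ₁ = α ^ ((d:ℝ) / 2 * q) * B ^ (-(d:ℝ) / 2) := by
    rw [hγ₁, integral_gaussMeasure h₁]
    have e : ∀ x : Ed d, r x ^ q * gaussDen d σ₁ x
        = α ^ ((d:ℝ) / 2 * q) * (rexp (-(q * c) * ‖x‖ ^ 2) * gaussDen d σ₁ x) := by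
      intro x
      rw [hrq x]
      ring
    simp_rw [e]
    rw [integral_const_mul, gauss_exp_int d h₁ hBpos]
  have hRq : ∫⁻ x, R x ^ q ∂γ₁
      = ENNReal.ofReal (α ^ ((d:ℝ) / 2 * q) * B ^ (-(d:ℝ) / 2)) := by
    have hpt : ∀ x, R x ^ q = ENNReal.ofReal (r x ^ q) := fun x =>
      ENNReal.ofReal_rpow_of_pos (hrpos x)
    simp_rw [hpt]
    rw [← ofReal_integral_eq_lintegral_ofReal hIq_int
      (Filter.Eventually.of_forall fun x => (Real.rpow_pos_of_pos (hrpos x) q).le), hIq_val]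
  -- Hölder
  have hH := ENNReal.lintegral_mul_le_Lp_mul_Lq γ₁ hpq hGmeas.aemeasurable hRmeas.aemeasurable
  rw [hGp, hRq] at hH
  set C : ℝ := α ^ ((d:ℝ) / 2) * ((p - 1) / (p * α - 1)) ^ ((d:ℝ) * (p - 1) / (2 * p))
    with hCdef
  have hCpos : 0 < C := by
    have h1 : 0 < (p - 1) / (p * α - 1) := div_pos (by linarith) (by linarith)
    rw [hCdef]
    positivity
  have hIq_rpow : (α ^ ((d:ℝ) / 2 * q) * B ^ (-(d:ℝ) / 2)) ^ (1 / q) = C := by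
    have hq0 : q ≠ 0 := hpq.symm.ne_zero
    rw [Real.mul_rpow (by positivity) (by positivity), ← Real.rpow_mul hαpos.le,
      ← Real.rpow_mul hBpos.le, hCdef]
    have e1 : (d:ℝ) / 2 * q * (1 / q) = (d:ℝ) / 2 := by
      field_simp
    have e2 : (p - 1) / (p * α - 1) = B⁻¹ := by
      rw [hBeq, inv_div]
    rw [e1, e2, Real.inv_rpow hBpos.le, ← Real.rpow_neg hBpos.le]
    congr 2
    rw [hqdef]
    field_simp
  have hRHS : ENNReal.ofReal A ^ (1 / p)
        * ENNReal.ofReal (α ^ ((d:ℝ) / 2 * q) * B ^ (-(d:ℝ) / 2)) ^ (1 / q)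
      = ENNReal.ofReal (A ^ (1 / p) * C) := by
    rw [ENNReal.ofReal_rpow_of_nonneg hA_nonneg (by positivity),
      ENNReal.ofReal_rpow_of_pos (by positivity), hIq_rpow,
      ← ENNReal.ofReal_mul (by positivity)]
  rw [hRHS] at hH
  have hG2 : ∫⁻ x, G x ∂γ₂ ≤ ENNReal.ofReal (A ^ (1 / p) * C) := hGR ▸ hH
  -- integrability of (f - m₁)² wrt γ₂
  have hint2 : Integrable (fun x => g x ^ 2) γ₂ := by
    refine ⟨(hgmeas.pow_const 2).aestronglyMeasurable, ?_⟩
    rw [hasFiniteIntegral_iff_ofReal (Filter.Eventually.of_forall fun x => sq_nonneg _)]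
    exact lt_of_le_of_lt hG2 ENNReal.ofReal_lt_top
  have hgval : ∫ x, g x ^ 2 ∂γ₂ ≤ A ^ (1 / p) * C := by
    rw [integral_eq_lintegral_of_nonneg_ae (Filter.Eventually.of_forall fun x => sq_nonneg _)
      (hgmeas.pow_const 2).aestronglyMeasurable]
    calc (∫⁻ x, ENNReal.ofReal (g x ^ 2) ∂γ₂).toReal
        ≤ (ENNReal.ofReal (A ^ (1 / p) * C)).toReal :=
          ENNReal.toReal_mono ENNReal.ofReal_ne_top hG2
      _ = A ^ (1 / p) * C := ENNReal.toReal_ofReal (by positivity)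
  -- variance minimization
  have hgL2 : MemLp g 2 γ₂ := (memLp_two_iff_integrable_sq hgmeas.aestronglyMeasurable).mpr hint2
  have hfeq : f = fun x => g x + m₁ := by
    funext x
    simp [hgdef]
  have hfL2 : MemLp f 2 γ₂ := by
    rw [hfeq]
    exact hgL2.add (memLp_const m₁)
  have hfint : Integrable f γ₂ := hfL2.integrable one_le_two
  have hfm2sq : Integrable (fun x => (f x - m₂) ^ 2) γ₂ :=
    (memLp_two_iff_integrable_sq ((hf.sub_const m₂).aestronglyMeasurable)).mp
      (hfL2.sub (memLp_const m₂))
  have hdiff : ∫ x, (g x ^ 2 - (f x - m₂) ^ 2) ∂γ₂ = (m₂ - m₁) ^ 2 := by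
    have e : ∀ x, g x ^ 2 - (f x - m₂) ^ 2
        = ((m₂ - m₁) * 2) * f x - (m₂ - m₁) * (m₁ + m₂) := by
      intro x
      simp only [hgdef]
      ring
    simp_rw [e]
    rw [integral_sub (hfint.const_mul _) (integrable_const _), integral_const_mul _ _,
      integral_const, probReal_univ, one_smul, ← hm₂]
    ring
  have hsub := integral_sub hint2 hfm2sq
  rw [hsub] at hdiff
  have hfinal : ∫ x, (f x - m₂) ^ 2 ∂γ₂ ≤ ∫ x, g x ^ 2 ∂γ₂ := by
    linarith [sq_nonneg (m₂ - m₁)]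
  calc ∫ x, (f x - m₂) ^ 2 ∂γ₂ ≤ ∫ x, g x ^ 2 ∂γ₂ := hfinal
    _ ≤ A ^ (1 / p) * C := hgval
    _ = C * A ^ (1 / p) := mul_comm _ _
    _ = C * (∫ x, |f x - m₁| ^ (2 * p) ∂γ₁) ^ (1 / p) := by
        have hAeq : A = ∫ x, |f x - m₁| ^ (2 * p) ∂γ₁ := by
          rw [hAdef]
          simp only [hgdef]
        rw [hAeq]
end
end

section
/- Let λ be a σ-finite measure on a measurable space, and let μ, ν be probability measures absolutely continuous with respect to λ with finite relative entropies KL(μ‖λ) < ∞ and KL(ν‖λ) < ∞. Then the relative entropy is 1-strongly convex with respect to the total variation norm: for every t ∈ [0,1], KL((1−t)μ + tν ‖ λ) ≤ (1−t)·KL(μ‖λ) + t·KL(ν‖λ) − (t(1−t)/2)·‖μ − ν‖²_TV. -/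
open MeasureTheory

noncomputable section

/-- The relative entropy (Kullback–Leibler divergence) `KL(μ‖λ) = ∫ log (dμ/dλ) dμ`,
as a real number (meaningful when `μ ≪ λ` and the integrand is `μ`-integrable). -/
def klReal {α : Type*} [MeasurableSpace α] (μ lam : Measure α) : ℝ :=
  ∫ x, Real.log ((μ.rnDeriv lam x).toReal) ∂μ

/-- The total variation norm `‖μ - ν‖_TV = |μ - ν|(univ)` of the difference of two finite
measures. -/
def tvNorm {α : Type*} [MeasurableSpace α] (μ ν : Measure α)
    [IsFiniteMeasure μ] [IsFiniteMeasure ν] : ℝ :=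
  ((μ.toSignedMeasure - ν.toSignedMeasure).totalVariation Set.univ).toReal


section Aux
open Real

lemma K_deriv_nonneg {r : ℝ} (hr : 0 < r) : 0 ≤ Real.log r + 1/r - 1 := by
  have h := Real.log_le_sub_one_of_pos (x := r⁻¹) (by positivity)
  rw [Real.log_inv] at h
  have hh : 1 - 1/r ≤ Real.log r := by rw [one_div]; linarith
  linarith [hh]

noncomputable def Kfun : ℝ → ℝ := fun r => (r+1)*Real.log r - 2*(r-1)

lemma hasDerivAt_K {r : ℝ} (hr : 0 < r) :
    HasDerivAt Kfun (Real.log r + 1/r - 1) r := by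
  have h1 : HasDerivAt (fun r : ℝ => (r+1)*Real.log r) (1 * Real.log r + (r+1) * r⁻¹) r :=
    ((hasDerivAt_id r).add_const 1).mul (Real.hasDerivAt_log hr.ne')
  have h2 : HasDerivAt (fun r : ℝ => 2*(r-1)) 2 r := by
    simpa using ((hasDerivAt_id r).sub_const 1).const_mul 2
  refine (h1.sub h2).congr_deriv ?_
  rw [add_mul, mul_inv_cancel₀ hr.ne']
  ring

lemma K_mono : MonotoneOn Kfun (Set.Ioi (0:ℝ)) := by
  refine monotoneOn_of_deriv_nonneg (convex_Ioi 0) ?_ ?_ ?_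
  · intro x hx
    exact (hasDerivAt_K hx).continuousAt.continuousWithinAt
  · intro x hx
    rw [interior_Ioi] at hx
    exact (hasDerivAt_K hx).differentiableAt.differentiableWithinAt
  · intro x hx
    rw [interior_Ioi] at hx
    rw [(hasDerivAt_K hx).deriv]
    exact K_deriv_nonneg hx

lemma K_one : Kfun 1 = 0 := by simp [Kfun]

lemma K_nonneg {r : ℝ} (hr : 1 ≤ r) : 0 ≤ Kfun r := by
  have := K_mono (Set.mem_Ioi.2 one_pos) (Set.mem_Ioi.2 (lt_of_lt_of_le one_pos hr)) hr
  rwa [K_one] at this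

lemma K_nonpos {r : ℝ} (hr0 : 0 < r) (hr : r ≤ 1) : Kfun r ≤ 0 := by
  have := K_mono (Set.mem_Ioi.2 hr0) (Set.mem_Ioi.2 one_pos) hr
  rwa [K_one] at this

noncomputable def Gfun : ℝ → ℝ := fun r => (r+2)*(r*Real.log r - r + 1) - (3/2)*(r-1)^2

lemma hasDerivAt_G {r : ℝ} (hr : 0 < r) : HasDerivAt Gfun (2 * Kfun r) r := by
  have hlog : HasDerivAt Real.log r⁻¹ r := Real.hasDerivAt_log hr.ne'
  have h1 : HasDerivAt (fun r : ℝ => r*Real.log r - r + 1)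
      (1 * Real.log r + r * r⁻¹ - 1) r := by
    exact (((hasDerivAt_id r).mul hlog).sub (hasDerivAt_id r)).add_const 1
  have h2 : HasDerivAt (fun r : ℝ => (r+2)*(r*Real.log r - r + 1))
      (1 * (r*Real.log r - r + 1) + (r+2) * (1 * Real.log r + r * r⁻¹ - 1)) r :=
    ((hasDerivAt_id r).add_const 2).mul h1
  have h3 : HasDerivAt (fun r : ℝ => (3/2)*(r-1)^2) ((3/2) * (2*(r-1))) r := by
    simpa using (((hasDerivAt_id r).sub_const 1).pow 2).const_mul (3/2:ℝ)
  refine (h2.sub h3).congr_deriv ?_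
  have : r * r⁻¹ = 1 := mul_inv_cancel₀ hr.ne'
  simp only [Kfun, this]
  ring

lemma G_one : Gfun 1 = 0 := by simp [Gfun]

lemma G_nonneg {r : ℝ} (hr : 0 < r) : 0 ≤ Gfun r := by
  rcases le_total r 1 with h | h
  · have hanti : AntitoneOn Gfun (Set.Ioc (0:ℝ) 1) := by
      refine antitoneOn_of_deriv_nonpos (convex_Ioc 0 1) ?_ ?_ ?_
      · intro x hx
        exact (hasDerivAt_G hx.1).continuousAt.continuousWithinAt
      · intro x hx
        rw [interior_Ioc] at hx
        exact (hasDerivAt_G hx.1).differentiableAt.differentiableWithinAt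
      · intro x hx
        rw [interior_Ioc] at hx
        rw [(hasDerivAt_G hx.1).deriv]
        have := K_nonpos hx.1 hx.2.le
        linarith
    have := hanti (Set.mem_Ioc.2 ⟨hr, h⟩) (Set.mem_Ioc.2 ⟨one_pos, le_refl 1⟩) h
    rwa [G_one] at this
  · have hmono : MonotoneOn Gfun (Set.Ici (1:ℝ)) := by
      refine monotoneOn_of_deriv_nonneg (convex_Ici 1) ?_ ?_ ?_
      · intro x hx
        exact (hasDerivAt_G (lt_of_lt_of_le one_pos hx)).continuousAt.continuousWithinAt
      · intro x hx
        rw [interior_Ici] at hx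
        exact (hasDerivAt_G (lt_trans one_pos hx)).differentiableAt.differentiableWithinAt
      · intro x hx
        rw [interior_Ici] at hx
        rw [(hasDerivAt_G (lt_trans one_pos hx)).deriv]
        have := K_nonneg hx.le
        linarith
    have := hmono (Set.mem_Ici.2 (le_refl 1)) (Set.mem_Ici.2 h) h
    rwa [G_one] at this

/-- Pointwise Pinsker-type inequality. -/
lemma pinsker_pointwise {x y : ℝ} (hx : 0 ≤ x) (hy : 0 ≤ y) (h0 : y = 0 → x = 0) :
    (3/2)*(x-y)^2/(x+2*y) ≤ x*Real.log x - x*Real.log y - x + y := by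
  rcases eq_or_lt_of_le hy with hy0 | hy0
  · -- y = 0 hence x = 0
    have hx0 : x = 0 := h0 hy0.symm
    simp [hx0, ← hy0]
  rcases eq_or_lt_of_le hx with hx0 | hx0
  · -- x = 0
    rw [← hx0]
    have hL : (3/2)*((0:ℝ)-y)^2/(0+2*y) = 3/4*y := by field_simp; ring
    rw [hL]
    have : (0:ℝ)*Real.log 0 - 0*Real.log y - 0 + y = y := by ring
    rw [this]
    linarith
  · -- x,y > 0 : substitute r = x / y
    set r := x / y with hr
    have hrpos : 0 < r := by positivity
    have hxry : x = r * y := (div_mul_cancel₀ x hy0.ne').symm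
    have hG := G_nonneg hrpos
    rw [Gfun] at hG
    have hlog : Real.log r = Real.log x - Real.log y := Real.log_div hx0.ne' hy0.ne'
    -- multiply out
    have key : (3/2)*(r-1)^2 ≤ (r+2)*(r*Real.log r - r + 1) := by linarith
    have h2 : (3/2)*(x-y)^2 ≤ (x+2*y)*(x*Real.log x - x*Real.log y - x + y) := by
      have e1 : (x-y)^2 = y^2 * (r-1)^2 := by rw [hxry]; ring
      have e2 : (x+2*y) = y*(r+2) := by rw [hxry]; ring
      have e3 : x*Real.log x - x*Real.log y - x + y = y * (r*Real.log r - r + 1) := by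
        rw [hlog, hxry]; ring
      rw [e1, e2, e3]
      calc (3/2)*(y^2*(r-1)^2) = y * y * ((3/2)*(r-1)^2) := by ring
      _ ≤ y * y * ((r+2)*(r*Real.log r - r + 1)) := by
          apply mul_le_mul_of_nonneg_left key (by positivity)
      _ = y*(r+2) * (y*(r*Real.log r - r + 1)) := by ring
    rw [div_le_iff₀ (by positivity)]
    calc (3/2)*(x-y)^2 ≤ (x+2*y)*(x*Real.log x - x*Real.log y - x + y) := h2
    _ = (x*Real.log x - x*Real.log y - x + y) * (x+2*y) := by ring

/-- Integral form of Pinsker's inequality at the density level. -/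
lemma pinsker_integral {α : Type*} [MeasurableSpace α] (lam : Measure α) {F H : α → ℝ}
    (hFm : Measurable F) (hHm : Measurable H)
    (hF0 : ∀ x, 0 ≤ F x) (hH0 : ∀ x, 0 ≤ H x) (h0 : ∀ x, H x = 0 → F x = 0)
    (hFi : Integrable F lam) (hHi : Integrable H lam)
    (hF1 : ∫ x, F x ∂lam = 1) (hH1 : ∫ x, H x ∂lam = 1)
    (hai : Integrable (fun x => F x * Real.log (F x) - F x * Real.log (H x)) lam) :
    (∫ x, |F x - H x| ∂lam)^2 / 2
      ≤ ∫ x, (F x * Real.log (F x) - F x * Real.log (H x)) ∂lam := by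
  set u : α → ℝ := fun x => |F x - H x| with hu
  set w : α → ℝ := fun x => F x + 2 * H x with hw
  set p : α → ℝ := fun x => (F x - H x)^2 / (F x + 2 * H x) with hp
  have hw0 : ∀ x, 0 ≤ w x := fun x => by
    have := hF0 x; have := hH0 x; simp only [hw]; linarith
  have hp0 : ∀ x, 0 ≤ p x := fun x => div_nonneg (sq_nonneg _) (hw0 x)
  have huw : ∀ x, u x ≤ w x := fun x => by
    have := hF0 x; have := hH0 x
    simp only [hu, hw, abs_le]; constructor <;> linarith
  have hpu : ∀ x, p x ≤ u x := by
    intro x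
    rcases eq_or_lt_of_le (hw0 x) with hw0x | hw0x
    · have hwx : F x + 2 * H x = 0 := hw0x.symm
      have hF : F x = 0 := by have := hF0 x; have := hH0 x; linarith
      have hH : H x = 0 := by have := hF0 x; have := hH0 x; linarith
      simp [hp, hu, hF, hH]
    · have hwx : (0:ℝ) < F x + 2 * H x := hw0x
      rw [hp]
      rw [div_le_iff₀ hwx]
      have h1 : (F x - H x)^2 = u x * u x := by rw [hu]; simp [sq_abs, sq]
      calc (F x - H x)^2 = u x * u x := h1
      _ ≤ u x * (F x + 2 * H x) := mul_le_mul_of_nonneg_left (huw x) (abs_nonneg _)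
  have hum : Measurable u := (hFm.sub hHm).abs
  have hui : Integrable u lam := (hFi.sub hHi).abs
  have hpm : Measurable p := (hFm.sub hHm).pow_const 2 |>.div (hFm.add (hHm.const_mul 2))
  have hpi : Integrable p lam := by
    refine Integrable.mono' hui hpm.aestronglyMeasurable ?_
    filter_upwards with x
    rw [Real.norm_of_nonneg (hp0 x)]
    exact hpu x
  -- Cauchy-Schwarz : (∫ u)^2 ≤ (∫ p) * (∫ w)
  have hwi : Integrable w lam := hFi.add (hHi.const_mul 2)
  have hwint : ∫ x, w x ∂lam = 3 := by
    simp only [hw]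
    rw [integral_add hFi (hHi.const_mul 2), integral_const_mul, hF1, hH1]
    norm_num
  have hCS : ∫ x, u x ∂lam ≤ (∫ x, p x ∂lam)^(1/2:ℝ) * (∫ x, w x ∂lam)^(1/2:ℝ) := by
    have hpq : (2:ℝ).HolderConjugate 2 := Real.holderConjugate_iff.mpr ⟨by norm_num, by norm_num⟩
    have hfg : ∀ x, Real.sqrt (p x) * Real.sqrt (w x) = u x := by
      intro x
      rw [← Real.sqrt_mul (hp0 x)]
      rcases eq_or_lt_of_le (hw0 x) with hw0x | hw0x
      · have hF : F x = 0 := by have := hF0 x; have := hH0 x; simp only [hw] at hw0x; linarith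
        have hH : H x = 0 := by have := hF0 x; have := hH0 x; simp only [hw] at hw0x; linarith
        simp [hp, hu, hF, hH]
      · have : p x * w x = (F x - H x)^2 := by
          rw [hp, hw, div_mul_cancel₀]
          · rw [hw] at hw0x; exact hw0x.ne'
        rw [this, Real.sqrt_sq_eq_abs]
    have hf2 : MemLp (fun x => Real.sqrt (p x)) (ENNReal.ofReal 2) lam := by
      rw [show ENNReal.ofReal 2 = 2 by norm_num]
      rw [memLp_two_iff_integrable_sq (hpm.sqrt.aestronglyMeasurable)]
      refine hpi.congr ?_
      filter_upwards with x
      rw [Real.sq_sqrt (hp0 x)]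
    have hg2 : MemLp (fun x => Real.sqrt (w x)) (ENNReal.ofReal 2) lam := by
      rw [show ENNReal.ofReal 2 = 2 by norm_num]
      rw [memLp_two_iff_integrable_sq ((show Measurable w from hFm.add (hHm.const_mul 2)).sqrt.aestronglyMeasurable)]
      refine hwi.congr ?_
      filter_upwards with x
      rw [Real.sq_sqrt (hw0 x)]
    have := integral_mul_le_Lp_mul_Lq_of_nonneg hpq
      (Filter.Eventually.of_forall fun x => Real.sqrt_nonneg (p x))
      (Filter.Eventually.of_forall fun x => Real.sqrt_nonneg (w x)) hf2 hg2
    calc ∫ x, u x ∂lam = ∫ x, Real.sqrt (p x) * Real.sqrt (w x) ∂lam := by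
          exact (integral_congr_ae (Filter.Eventually.of_forall hfg)).symm
    _ ≤ (∫ x, Real.sqrt (p x) ^ (2:ℝ) ∂lam)^(1/2:ℝ) * (∫ x, Real.sqrt (w x) ^ (2:ℝ) ∂lam)^(1/2:ℝ) := this
    _ = (∫ x, p x ∂lam)^(1/2:ℝ) * (∫ x, w x ∂lam)^(1/2:ℝ) := by
        have hsq : ∀ y : ℝ, 0 ≤ y → Real.sqrt y ^ (2:ℝ) = y := by
          intro y hy
          rw [show ((2:ℝ)) = ((2:ℕ):ℝ) by norm_num, Real.rpow_natCast, Real.sq_sqrt hy]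
        congr 1
        · congr 1
          refine integral_congr_ae (Filter.Eventually.of_forall fun x => ?_)
          exact hsq (p x) (hp0 x)
        · congr 1
          refine integral_congr_ae (Filter.Eventually.of_forall fun x => ?_)
          exact hsq (w x) (hw0 x)
  have hTnn : 0 ≤ ∫ x, u x ∂lam := integral_nonneg fun x => abs_nonneg _
  have hpint_nn : 0 ≤ ∫ x, p x ∂lam := integral_nonneg hp0
  have hT2 : (∫ x, u x ∂lam)^2 ≤ 3 * ∫ x, p x ∂lam := by
    have hsq := mul_self_le_mul_self hTnn hCS
    calc (∫ x, u x ∂lam)^2 = (∫ x, u x ∂lam) * (∫ x, u x ∂lam) := sq (∫ x, u x ∂lam) ▸ by ring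
    _ ≤ ((∫ x, p x ∂lam)^(1/2:ℝ) * (∫ x, w x ∂lam)^(1/2:ℝ))
        * ((∫ x, p x ∂lam)^(1/2:ℝ) * (∫ x, w x ∂lam)^(1/2:ℝ)) := hsq
    _ = ((∫ x, p x ∂lam)^(1/2:ℝ) * (∫ x, p x ∂lam)^(1/2:ℝ))
        * ((∫ x, w x ∂lam)^(1/2:ℝ) * (∫ x, w x ∂lam)^(1/2:ℝ)) := by ring
    _ = (∫ x, p x ∂lam) * (∫ x, w x ∂lam) := by
        rw [← Real.rpow_add' hpint_nn (by norm_num), ← Real.rpow_add' (by rw [hwint]; norm_num) (by norm_num)]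
        norm_num
    _ = 3 * ∫ x, p x ∂lam := by rw [hwint]; ring
  -- pointwise bound : (3/2) * p ≤ integrand - F + H
  have hIsub : Integrable (fun x => F x * Real.log (F x) - F x * Real.log (H x) - F x) lam :=
    hai.sub hFi
  have hIa : Integrable (fun x => F x * Real.log (F x) - F x * Real.log (H x) - F x + H x) lam :=
    hIsub.add hHi
  have hmono : (3/2) * ∫ x, p x ∂lam
      ≤ ∫ x, (F x * Real.log (F x) - F x * Real.log (H x) - F x + H x) ∂lam := by
    rw [← integral_const_mul]
    refine integral_mono (hpi.const_mul _) hIa fun x => ?_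
    have := pinsker_pointwise (hF0 x) (hH0 x) (h0 x)
    simp only [hp]
    calc (3:ℝ)/2 * ((F x - H x)^2 / (F x + 2 * H x))
        = (3/2)*(F x - H x)^2/(F x + 2*H x) := by ring
    _ ≤ F x * Real.log (F x) - F x * Real.log (H x) - F x + H x := this
  have hintegral_a : ∫ x, (F x * Real.log (F x) - F x * Real.log (H x) - F x + H x) ∂lam
      = ∫ x, (F x * Real.log (F x) - F x * Real.log (H x)) ∂lam := by
    rw [integral_add hIsub hHi, integral_sub hai hFi, hF1, hH1]
    ring
  rw [hintegral_a] at hmono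
  rw [div_le_iff₀ (by norm_num : (0:ℝ) < 2)]
  calc (∫ x, |F x - H x| ∂lam)^2 ≤ 3 * ∫ x, p x ∂lam := hT2
  _ = 2 * ((3/2) * ∫ x, p x ∂lam) := by ring
  _ ≤ 2 * ∫ x, (F x * Real.log (F x) - F x * Real.log (H x)) ∂lam := by linarith
  _ = (∫ x, (F x * Real.log (F x) - F x * Real.log (H x)) ∂lam) * 2 := by ring

lemma tvNorm_eq_integral {α : Type*} [MeasurableSpace α] (lam μ ν : Measure α) [SigmaFinite lam]
    [IsFiniteMeasure μ] [IsFiniteMeasure ν] (hμ : μ ≪ lam) (hν : ν ≪ lam) :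
    tvNorm μ ν = ∫ x, |(μ.rnDeriv lam x).toReal - (ν.rnDeriv lam x).toReal| ∂lam := by
  set f := μ.rnDeriv lam with hf
  set g := ν.rnDeriv lam with hg
  have hfm : Measurable f := Measure.measurable_rnDeriv μ lam
  have hgm : Measurable g := Measure.measurable_rnDeriv ν lam
  have hflt : ∀ᵐ x ∂lam, f x < ⊤ := Measure.rnDeriv_lt_top μ lam
  have hglt : ∀ᵐ x ∂lam, g x < ⊤ := Measure.rnDeriv_lt_top ν lam
  have hμd : lam.withDensity f = μ := Measure.withDensity_rnDeriv_eq μ lam hμ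
  have hνd : lam.withDensity g = ν := Measure.withDensity_rnDeriv_eq ν lam hν
  set pos := lam.withDensity (fun x => f x - g x) with hpos
  set neg := lam.withDensity (fun x => g x - f x) with hneg
  have hposle : pos ≤ lam.withDensity f := by
    refine withDensity_mono (Filter.Eventually.of_forall fun x => tsub_le_self)
  have hnegle : neg ≤ lam.withDensity g := by
    refine withDensity_mono (Filter.Eventually.of_forall fun x => tsub_le_self)
  have hposfin : IsFiniteMeasure pos := by
    constructor
    calc pos Set.univ ≤ lam.withDensity f Set.univ := hposle _
    _ = μ Set.univ := by rw [hμd]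
    _ < ⊤ := measure_lt_top μ _
  have hnegfin : IsFiniteMeasure neg := by
    constructor
    calc neg Set.univ ≤ lam.withDensity g Set.univ := hnegle _
    _ = ν Set.univ := by rw [hνd]
    _ < ⊤ := measure_lt_top ν _
  have hms : pos ⟂ₘ neg := by
    refine ⟨{x | f x ≤ g x}, measurableSet_le hfm hgm, ?_, ?_⟩
    · rw [hpos, withDensity_apply _ (measurableSet_le hfm hgm)]
      rw [setLIntegral_congr_fun (measurableSet_le hfm hgm)
        (fun x hx => (tsub_eq_zero_of_le hx : f x - g x = 0))]
      simp
    · rw [hneg, withDensity_apply _ (measurableSet_le hfm hgm).compl]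
      rw [setLIntegral_congr_fun (measurableSet_le hfm hgm).compl
        (fun x hx =>
          (tsub_eq_zero_of_le (le_of_not_ge hx) : g x - f x = 0))]
      simp
  let j : JordanDecomposition α :=
    @JordanDecomposition.mk α _ pos neg hposfin hnegfin hms
  have hkey : μ.toSignedMeasure - ν.toSignedMeasure = j.toSignedMeasure := by
    rw [JordanDecomposition.toSignedMeasure]
    refine VectorMeasure.ext fun i hi => ?_
    rw [Measure.toSignedMeasure_sub_apply hi, Measure.toSignedMeasure_sub_apply hi]
    -- key ENNReal identity
    have hcore : pos i + ν i = neg i + μ i := by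
      rw [← hμd, ← hνd, hpos, hneg, withDensity_apply _ hi, withDensity_apply _ hi,
        withDensity_apply _ hi, withDensity_apply _ hi,
        ← lintegral_add_right _ hgm, ← lintegral_add_right _ hfm]
      refine lintegral_congr_ae ?_
      have : ∀ᵐ x ∂lam, f x < ⊤ ∧ g x < ⊤ := hflt.and hglt
      filter_upwards [ae_restrict_of_ae this] with x hx
      rcases le_total (f x) (g x) with h | h
      · rw [tsub_eq_zero_of_le h, tsub_add_cancel_of_le h, zero_add]
      · rw [tsub_eq_zero_of_le h, tsub_add_cancel_of_le h, zero_add]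
    have h1 : pos i ≠ ⊤ := (lt_of_le_of_lt (measure_mono (Set.subset_univ i)) hposfin.measure_univ_lt_top).ne
    have h2 : neg i ≠ ⊤ := (lt_of_le_of_lt (measure_mono (Set.subset_univ i)) hnegfin.measure_univ_lt_top).ne
    have h3 : μ i ≠ ⊤ := measure_ne_top μ i
    have h4 : ν i ≠ ⊤ := measure_ne_top ν i
    have := congrArg ENNReal.toReal hcore
    rw [ENNReal.toReal_add h1 h4, ENNReal.toReal_add h2 h3] at this
    have e1 : j.posPart.real i = (pos i).toReal := rfl
    have e2 : j.negPart.real i = (neg i).toReal := rfl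
    have e3 : μ.real i = (μ i).toReal := rfl
    have e4 : ν.real i = (ν i).toReal := rfl
    linarith
  have hjd : (μ.toSignedMeasure - ν.toSignedMeasure).toJordanDecomposition = j :=
    SignedMeasure.toJordanDecomposition_eq hkey
  rw [tvNorm, SignedMeasure.totalVariation, hjd]
  have hju : (j.posPart + j.negPart) Set.univ = ∫⁻ x, ((f x - g x) + (g x - f x)) ∂lam := by
    show (pos + neg) Set.univ = _
    rw [Measure.add_apply, hpos, hneg, withDensity_apply _ MeasurableSet.univ,
      withDensity_apply _ MeasurableSet.univ, Measure.restrict_univ,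
      ← lintegral_add_left (f := fun x => f x - g x) (hfm.sub hgm)]
  rw [hju]
  rw [← integral_toReal (f := fun x => f x - g x + (g x - f x)) ((hfm.sub hgm).add (hgm.sub hfm)).aemeasurable ?_]
  · refine integral_congr_ae ?_
    filter_upwards [hflt, hglt] with x hfx hgx
    rcases le_total (f x) (g x) with h | h
    · rw [tsub_eq_zero_of_le h, zero_add, ENNReal.toReal_sub_of_le h hgx.ne]
      rw [abs_of_nonpos (by simp [sub_nonpos, ENNReal.toReal_le_toReal hfx.ne hgx.ne, h])]
      ring
    · rw [tsub_eq_zero_of_le h, add_zero, ENNReal.toReal_sub_of_le h hfx.ne]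
      rw [abs_of_nonneg (by simp [sub_nonneg, ENNReal.toReal_le_toReal hgx.ne hfx.ne, h])]
  · filter_upwards [hflt, hglt] with x hfx hgx
    exact lt_of_le_of_lt (add_le_add tsub_le_self tsub_le_self)
      (ENNReal.add_lt_top.2 ⟨hfx, hgx⟩)

lemma klReal_eq_integral {α : Type*} [MeasurableSpace α] (lam μ : Measure α)
    [SigmaFinite lam] [IsFiniteMeasure μ] (hμ : μ ≪ lam) :
    klReal μ lam
      = ∫ x, (μ.rnDeriv lam x).toReal * Real.log ((μ.rnDeriv lam x).toReal) ∂lam := by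
  rw [klReal]
  rw [← integral_rnDeriv_smul hμ]
  rfl

lemma integrable_klReal_iff {α : Type*} [MeasurableSpace α] (lam μ : Measure α)
    [SigmaFinite lam] [IsFiniteMeasure μ] (hμ : μ ≪ lam) :
    Integrable (fun x => (μ.rnDeriv lam x).toReal * Real.log ((μ.rnDeriv lam x).toReal)) lam
      ↔ Integrable (fun x => Real.log ((μ.rnDeriv lam x).toReal)) μ := by
  rw [← integrable_rnDeriv_smul_iff hμ]
  rfl

end Aux

set_option maxHeartbeats 2000000 in
/-- **1-strong convexity of the relative entropy with respect to the total variation norm**: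
for probability measures `μ, ν ≪ λ` with finite relative entropy and `t ∈ [0,1]`,
`KL((1-t)μ + tν ‖ λ) ≤ (1-t) KL(μ‖λ) + t KL(ν‖λ) - (t(1-t)/2) ‖μ - ν‖²_TV`. -/
theorem klReal_strongly_convex_tv {α : Type*} [MeasurableSpace α]
    (lam μ ν : Measure α) [SigmaFinite lam]
    [IsProbabilityMeasure μ] [IsProbabilityMeasure ν]
    (hμ : μ ≪ lam) (hν : ν ≪ lam)
    (hμint : Integrable (fun x => Real.log ((μ.rnDeriv lam x).toReal)) μ)
    (hνint : Integrable (fun x => Real.log ((ν.rnDeriv lam x).toReal)) ν)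
    (t : ℝ) (ht0 : 0 ≤ t) (ht1 : t ≤ 1) :
    klReal (ENNReal.ofReal (1 - t) • μ + ENNReal.ofReal t • ν) lam
      ≤ (1 - t) * klReal μ lam + t * klReal ν lam
        - t * (1 - t) / 2 * tvNorm μ ν ^ 2 := by
  -- trivial cases t = 0 and t = 1
  rcases eq_or_lt_of_le ht0 with h0 | h0
  · rw [← h0]
    have : ENNReal.ofReal (1 - 0) • μ + ENNReal.ofReal 0 • ν = μ := by
      simp
    rw [this]
    ring_nf
    norm_num
  rcases eq_or_lt_of_le ht1 with h1 | h1
  · rw [h1]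
    have : ENNReal.ofReal (1 - 1) • μ + ENNReal.ofReal 1 • ν = ν := by
      simp
    rw [this]
    ring_nf
    norm_num
  -- main case 0 < t < 1
  set ρ : Measure α := ENNReal.ofReal (1 - t) • μ + ENNReal.ofReal t • ν with hρdef
  have ht0' : (0:ℝ) < 1 - t := by linarith
  haveI hfinμ' : IsFiniteMeasure (ENNReal.ofReal (1 - t) • μ) := by
    constructor
    rw [Measure.smul_apply, smul_eq_mul, measure_univ, mul_one]
    exact ENNReal.ofReal_lt_top
  haveI hfinν' : IsFiniteMeasure (ENNReal.ofReal t • ν) := by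
    constructor
    rw [Measure.smul_apply, smul_eq_mul, measure_univ, mul_one]
    exact ENNReal.ofReal_lt_top
  haveI hfinρ : IsFiniteMeasure ρ := by
    rw [hρdef]; infer_instance
  have hρac : ρ ≪ lam := by
    intro s hs
    rw [hρdef, Measure.add_apply, Measure.smul_apply, Measure.smul_apply,
      hμ hs, hν hs]
    simp
  -- densities
  set F : α → ℝ := fun x => (μ.rnDeriv lam x).toReal with hF
  set G : α → ℝ := fun x => (ν.rnDeriv lam x).toReal with hG
  set H : α → ℝ := fun x => (1-t) * F x + t * G x with hH
  have hFm : Measurable F := (Measure.measurable_rnDeriv μ lam).ennreal_toReal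
  have hGm : Measurable G := (Measure.measurable_rnDeriv ν lam).ennreal_toReal
  have hHm : Measurable H := (hFm.const_mul _).add (hGm.const_mul _)
  have hF0 : ∀ x, 0 ≤ F x := fun x => ENNReal.toReal_nonneg
  have hG0 : ∀ x, 0 ≤ G x := fun x => ENNReal.toReal_nonneg
  have hH0 : ∀ x, 0 ≤ H x := fun x => by
    have := hF0 x; have := hG0 x
    have : 0 ≤ (1-t) * F x := mul_nonneg ht0'.le (hF0 x)
    have : 0 ≤ t * G x := mul_nonneg ht0 (hG0 x)
    simp only [hH]; linarith
  have hHF0 : ∀ x, H x = 0 → F x = 0 := fun x hx => by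
    have h1 : 0 ≤ (1-t) * F x := mul_nonneg ht0'.le (hF0 x)
    have h2 : 0 ≤ t * G x := mul_nonneg ht0 (hG0 x)
    simp only [hH] at hx
    nlinarith [hF0 x]
  have hHG0 : ∀ x, H x = 0 → G x = 0 := fun x hx => by
    have h1 : 0 ≤ (1-t) * F x := mul_nonneg ht0'.le (hF0 x)
    have h2 : 0 ≤ t * G x := mul_nonneg ht0 (hG0 x)
    simp only [hH] at hx
    nlinarith [hG0 x]
  have hFi : Integrable F lam := Measure.integrable_toReal_rnDeriv
  have hGi : Integrable G lam := Measure.integrable_toReal_rnDeriv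
  have hHi : Integrable H lam := ((hFi.const_mul _).add (hGi.const_mul _))
  have hF1 : ∫ x, F x ∂lam = 1 := by
    rw [hF]; rw [Measure.integral_toReal_rnDeriv hμ, measureReal_def, measure_univ, ENNReal.toReal_one]
  have hG1 : ∫ x, G x ∂lam = 1 := by
    rw [hG]; rw [Measure.integral_toReal_rnDeriv hν, measureReal_def, measure_univ, ENNReal.toReal_one]
  have hH1 : ∫ x, H x ∂lam = 1 := by
    simp only [hH]
    rw [integral_add (hFi.const_mul _) (hGi.const_mul _), integral_const_mul, integral_const_mul,
      hF1, hG1]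
    ring
  -- integrability of entropies
  have hφF : Integrable (fun x => F x * Real.log (F x)) lam :=
    (integrable_klReal_iff lam μ hμ).2 hμint
  have hφG : Integrable (fun x => G x * Real.log (G x)) lam :=
    (integrable_klReal_iff lam ν hν).2 hνint
  -- integrability of F * log H  and  G * log H
  have cross_int : ∀ (P : α → ℝ) (c : ℝ), 0 < c → (∀ x, 0 ≤ P x) → Measurable P →
      Integrable P lam → Integrable (fun x => P x * Real.log (P x)) lam →
      (∀ x, c * P x ≤ H x) →
      Integrable (fun x => P x * Real.log (H x)) lam := by
    intro P c hc hP0 hPm hPi hPφ hPH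
    have hlow : ∀ x, P x * Real.log c + P x * Real.log (P x) ≤ P x * Real.log (H x) := by
      intro x
      rcases eq_or_lt_of_le (hP0 x) with hP | hP
      · rw [← hP]; simp
      · have hHx : 0 < H x := lt_of_lt_of_le (by positivity) (hPH x)
        have : Real.log (c * P x) ≤ Real.log (H x) :=
          Real.log_le_log (by positivity) (hPH x)
        rw [Real.log_mul hc.ne' hP.ne'] at this
        nlinarith
    have hhigh : ∀ x, P x * Real.log (H x) ≤ P x * Real.log (P x) + H x - P x := by
      intro x
      rcases eq_or_lt_of_le (hP0 x) with hP | hP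
      · rw [← hP]
        have hHx : 0 ≤ H x := hH0 x
        simp; linarith
      · have hHx : 0 < H x := lt_of_lt_of_le (by positivity) (hPH x)
        have hlog : Real.log (H x) - Real.log (P x) ≤ H x / P x - 1 := by
          have := Real.log_le_sub_one_of_pos (show 0 < H x / P x by positivity)
          rwa [Real.log_div hHx.ne' hP.ne'] at this
        have h4 : P x * (Real.log (H x) - Real.log (P x)) ≤ P x * (H x / P x - 1) :=
          mul_le_mul_of_nonneg_left hlog hP.le
        have hPx : P x * (H x / P x - 1) = H x - P x := by field_simp
        rw [hPx, mul_sub] at h4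
        linarith
    have hbound : Integrable
        (fun x => |Real.log c * P x + P x * Real.log (P x)| + |P x * Real.log (P x) + H x - P x|)
        lam := (((hPi.const_mul (Real.log c)).add hPφ).abs).add (((hPφ.add hHi).sub hPi).abs)
    refine Integrable.mono' hbound
      ((hPm.mul ((Real.measurable_log).comp hHm)).aestronglyMeasurable) ?_
    filter_upwards with x
    rw [Real.norm_eq_abs, abs_le]
    have hcomm : Real.log c * P x = P x * Real.log c := mul_comm _ _
    constructor
    · have := hlow x
      have h2 := neg_abs_le (Real.log c * P x + P x * Real.log (P x))
      have h3 := abs_nonneg (P x * Real.log (P x) + H x - P x)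
      linarith
    · have := hhigh x
      have h2 := le_abs_self (P x * Real.log (P x) + H x - P x)
      have h3 := abs_nonneg (Real.log c * P x + P x * Real.log (P x))
      linarith
  have hFH_le : ∀ x, (1-t) * F x ≤ H x := fun x => by
    have : 0 ≤ t * G x := mul_nonneg ht0 (hG0 x)
    simp only [hH]; linarith
  have hGH_le : ∀ x, t * G x ≤ H x := fun x => by
    have : 0 ≤ (1-t) * F x := mul_nonneg ht0'.le (hF0 x)
    simp only [hH]; linarith
  have hFlogH : Integrable (fun x => F x * Real.log (H x)) lam :=
    cross_int F (1-t) ht0' hF0 hFm hFi hφF hFH_le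
  have hGlogH : Integrable (fun x => G x * Real.log (H x)) lam :=
    cross_int G t h0 hG0 hGm hGi hφG hGH_le
  have haa : Integrable (fun x => F x * Real.log (F x) - F x * Real.log (H x)) lam :=
    hφF.sub hFlogH
  have hbb : Integrable (fun x => G x * Real.log (G x) - G x * Real.log (H x)) lam :=
    hφG.sub hGlogH
  -- the density of ρ
  have hrnρ : (fun x => (ρ.rnDeriv lam x).toReal) =ᵐ[lam] H := by
    have h1 : ρ.rnDeriv lam =ᵐ[lam]
        (ENNReal.ofReal (1-t) • μ).rnDeriv lam + (ENNReal.ofReal t • ν).rnDeriv lam :=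
      Measure.rnDeriv_add' _ _ _
    have h2 : (ENNReal.ofReal (1-t) • μ).rnDeriv lam
        =ᵐ[lam] ENNReal.ofReal (1-t) • μ.rnDeriv lam :=
      Measure.rnDeriv_smul_left_of_ne_top' μ lam ENNReal.ofReal_ne_top
    have h3 : (ENNReal.ofReal t • ν).rnDeriv lam
        =ᵐ[lam] ENNReal.ofReal t • ν.rnDeriv lam :=
      Measure.rnDeriv_smul_left_of_ne_top' ν lam ENNReal.ofReal_ne_top
    filter_upwards [h1, h2, h3, Measure.rnDeriv_lt_top μ lam, Measure.rnDeriv_lt_top ν lam]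
      with x hx1 hx2 hx3 hfx hgx
    rw [hx1]
    simp only [Pi.add_apply, Pi.smul_apply, smul_eq_mul] at hx2 hx3 ⊢
    rw [hx2, hx3]
    rw [ENNReal.toReal_add (ENNReal.mul_ne_top ENNReal.ofReal_ne_top hfx.ne)
        (ENNReal.mul_ne_top ENNReal.ofReal_ne_top hgx.ne),
      ENNReal.toReal_mul, ENNReal.toReal_mul,
      ENNReal.toReal_ofReal ht0'.le, ENNReal.toReal_ofReal ht0]
  -- klReal of ρ as an integral over lam
  have hklρ : klReal ρ lam = ∫ x, H x * Real.log (H x) ∂lam := by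
    rw [klReal_eq_integral lam ρ hρac]
    refine integral_congr_ae ?_
    filter_upwards [hrnρ] with x hx
    rw [hx]
  have hklμ : klReal μ lam = ∫ x, F x * Real.log (F x) ∂lam := klReal_eq_integral lam μ hμ
  have hklν : klReal ν lam = ∫ x, G x * Real.log (G x) ∂lam := klReal_eq_integral lam ν hν
  -- decomposition identity
  have hident : ∫ x, H x * Real.log (H x) ∂lam
      = (1-t) * ∫ x, F x * Real.log (F x) ∂lam + t * ∫ x, G x * Real.log (G x) ∂lam
        - (1-t) * ∫ x, (F x * Real.log (F x) - F x * Real.log (H x)) ∂lam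
        - t * ∫ x, (G x * Real.log (G x) - G x * Real.log (H x)) ∂lam := by
    have hpt : ∀ x, H x * Real.log (H x)
        = (1-t) * (F x * Real.log (F x)) + t * (G x * Real.log (G x))
          - (1-t) * (F x * Real.log (F x) - F x * Real.log (H x))
          - t * (G x * Real.log (G x) - G x * Real.log (H x)) := by
      intro x
      simp only [hH]
      ring
    have hIφF : Integrable (fun x => (1-t) * (F x * Real.log (F x))) lam := hφF.const_mul _
    have hIφG : Integrable (fun x => t * (G x * Real.log (G x))) lam := hφG.const_mul _
    have hIaa : Integrable (fun x => (1-t) * (F x * Real.log (F x) - F x * Real.log (H x))) lam :=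
      haa.const_mul _
    have hIbb : Integrable (fun x => t * (G x * Real.log (G x) - G x * Real.log (H x))) lam :=
      hbb.const_mul _
    have hI1 : Integrable (fun x => (1-t) * (F x * Real.log (F x)) + t * (G x * Real.log (G x)))
        lam := hIφF.add hIφG
    have hI2 : Integrable (fun x => (1-t) * (F x * Real.log (F x)) + t * (G x * Real.log (G x))
        - (1-t) * (F x * Real.log (F x) - F x * Real.log (H x))) lam := hI1.sub hIaa
    rw [integral_congr_ae (Filter.Eventually.of_forall hpt)]
    rw [integral_sub hI2 hIbb, integral_sub hI1 hIaa, integral_add hIφF hIφG,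
      integral_const_mul, integral_const_mul, integral_const_mul, integral_const_mul]
  -- Pinsker bounds
  set T : ℝ := ∫ x, |F x - G x| ∂lam with hT
  have hTnn : 0 ≤ T := integral_nonneg fun x => abs_nonneg _
  have hFHT : ∫ x, |F x - H x| ∂lam = t * T := by
    have hptw : ∀ x, |F x - H x| = t * |F x - G x| := by
      intro x
      have h : F x - H x = t * (F x - G x) := by simp only [hH]; ring
      rw [h, abs_mul, abs_of_nonneg ht0]
    rw [integral_congr_ae (Filter.Eventually.of_forall hptw), integral_const_mul, hT]
  have hGHT : ∫ x, |G x - H x| ∂lam = (1-t) * T := by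
    have hptw : ∀ x, |G x - H x| = (1-t) * |F x - G x| := by
      intro x
      have h : G x - H x = (1-t) * (G x - F x) := by simp only [hH]; ring
      rw [h, abs_mul, abs_of_nonneg ht0'.le, abs_sub_comm]
    rw [integral_congr_ae (Filter.Eventually.of_forall hptw), integral_const_mul, hT]
  have hpins1 : (t * T)^2 / 2 ≤ ∫ x, (F x * Real.log (F x) - F x * Real.log (H x)) ∂lam := by
    rw [← hFHT]
    exact pinsker_integral lam hFm hHm hF0 hH0 hHF0 hFi hHi hF1 hH1 haa
  have hpins2 : ((1-t) * T)^2 / 2 ≤ ∫ x, (G x * Real.log (G x) - G x * Real.log (H x)) ∂lam := by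
    rw [← hGHT]
    exact pinsker_integral lam hGm hHm hG0 hH0 hHG0 hGi hHi hG1 hH1 hbb
  -- total variation
  have hTV : tvNorm μ ν = T := tvNorm_eq_integral lam μ ν hμ hν
  -- conclude
  rw [hklρ, hident, hklμ, hklν, hTV]
  have e1 : (0:ℝ) ≤ (1-t) * (∫ x, (F x * Real.log (F x) - F x * Real.log (H x)) ∂lam) -
      (1-t) * ((t*T)^2/2) := by
    have := hpins1
    nlinarith
  have e2 : (0:ℝ) ≤ t * (∫ x, (G x * Real.log (G x) - G x * Real.log (H x)) ∂lam) -
      t * (((1-t)*T)^2/2) := by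
    have := hpins2
    nlinarith
  nlinarith [e1, e2]


end
end
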